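/- arXiv:2103.05097 — 2 statements merged into one kernel-verified Lean document; each statement's English description precedes it below -/
import Mathlib

section
/- Let X be a real Banach space of dimension greater than 1. Then cof(X) = |X*|, the cardinality of the topological dual space X* of X. -/
open Cardinal Set

universe u v

noncomputable section

/-- A hyperplane of a normed space: the kernel of a nonzero continuous linear functional. -/
def IsHyperplane {X : Type u} [NormedAddCommGroup X] [NormedSpace ℝ X] (H : Set X) : Prop :=
  ∃ f : X →L[ℝ] ℝ, f ≠ 0 ∧ H = {x | f x = 0}

/-- Member of the σ-ideal generated by hyperplanes: covered by countably many hyperplanes. -/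
def InHyperplaneIdeal {X : Type u} [NormedAddCommGroup X] [NormedSpace ℝ X] (Y : Set X) : Prop :=
  ∃ F : Set (Set X), F.Countable ∧ (∀ H ∈ F, IsHyperplane H) ∧ Y ⊆ ⋃₀ F

/-- Additivity of the hyperplane σ-ideal. -/
def addH (X : Type u) [NormedAddCommGroup X] [NormedSpace ℝ X] : Cardinal.{u} :=
  sInf {c | ∃ F : Set (Set X), (∀ A ∈ F, InHyperplaneIdeal A) ∧
    ¬ InHyperplaneIdeal (⋃₀ F) ∧ #F = c}

/-- Covering number of the hyperplane σ-ideal. -/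
def covH (X : Type u) [NormedAddCommGroup X] [NormedSpace ℝ X] : Cardinal.{u} :=
  sInf {c | ∃ F : Set (Set X), (∀ A ∈ F, InHyperplaneIdeal A) ∧ ⋃₀ F = Set.univ ∧ #F = c}

/-- Uniformity of the hyperplane σ-ideal. -/
def nonH (X : Type u) [NormedAddCommGroup X] [NormedSpace ℝ X] : Cardinal.{u} :=
  sInf {c | ∃ Y : Set X, ¬ InHyperplaneIdeal Y ∧ #Y = c}

/-- Cofinality of the hyperplane σ-ideal. -/
def cofH (X : Type u) [NormedAddCommGroup X] [NormedSpace ℝ X] : Cardinal.{u} :=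
  sInf {c | ∃ F : Set (Set X), (∀ A ∈ F, InHyperplaneIdeal A) ∧
    (∀ Y : Set X, InHyperplaneIdeal Y → ∃ A ∈ F, Y ⊆ A) ∧ #F = c}

/-- Density of a topological space: least cardinality of a dense subset. -/
def densH (X : Type u) [TopologicalSpace X] : Cardinal.{u} :=
  sInf {c | ∃ D : Set X, Dense D ∧ #D = c}

/-- `cf([κ]^ω)`: least cardinality of a cofinal family of countable subsets of κ. -/
def cfCtblSubsets (κ : Cardinal.{u}) : Cardinal.{u} :=
  sInf {c | ∃ F : Set (Set κ.out), (∀ S ∈ F, S.Countable) ∧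
    (∀ S : Set κ.out, S.Countable → ∃ T ∈ F, S ⊆ T) ∧ #F = c}

/-- A compact space has small diagonal. -/
def HasSmallDiagonal (K : Type u) [TopologicalSpace K] : Prop :=
  ∀ A : Set (K × K), #A = Cardinal.aleph 1 → A ∩ Set.diagonal K = ∅ →
    ∃ B ⊆ A, ¬ B.Countable ∧ closure B ∩ Set.diagonal K = ∅

/-- A topological space is scattered. -/
def IsScattered (K : Type u) [TopologicalSpace K] : Prop :=
  ∀ S : Set K, S.Nonempty → ∃ x ∈ S, ∃ U : Set K, IsOpen U ∧ U ∩ S = {x}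


section AuxCard
open Metric

-- maximal separated set
theorem exists_max_sep {Y : Type u} [NormedAddCommGroup Y] : ∃ S : Set Y, Maximal (· ∈ {S : Set Y | S ⊆ closedBall 0 1 ∧
    S.Pairwise fun x y => (3/4 : ℝ) ≤ dist x y}) S := by
  apply zorn_subset
  intro c hc hchain
  refine ⟨⋃₀ c, ⟨?_, ?_⟩, fun s hs => subset_sUnion_of_mem hs⟩
  · exact sUnion_subset fun s hs => (hc hs).1
  · intro x hx y hy hxy
    obtain ⟨s, hs, hxs⟩ := hx
    obtain ⟨t, ht, hyt⟩ := hy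
    rcases hchain.total hs ht with h | h
    · exact (hc ht).2 (h hxs) hyt hxy
    · exact (hc hs).2 hxs (h hyt) hxy

set_option maxHeartbeats 1000000 in
theorem card_seq_le {Y : Type u} [NormedAddCommGroup Y] [NormedSpace ℝ Y] [CompleteSpace Y] [Nontrivial Y] : #(ℕ → Y) ≤ #Y := by
  classical
  obtain ⟨S, ⟨hSball, hSsep⟩, hSmax⟩ := exists_max_sep (Y := Y)
  have hnorm1 : ∀ s : S, ‖(s : Y)‖ ≤ 1 := by
    intro s
    have := hSball s.2
    rwa [mem_closedBall_zero_iff] at this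
  -- net property
  have net : ∀ r : Y, ‖r‖ ≤ 1 → ∃ s ∈ S, ‖r - s‖ ≤ 3/4 := by
    intro r hr
    by_contra hcon
    push_neg at hcon
    have hrS : r ∉ S := by
      intro hrs
      have := hcon r hrs
      simp only [sub_self, norm_zero] at this
      linarith
    have hins : insert r S ∈ {T : Set Y | T ⊆ closedBall 0 1 ∧
        T.Pairwise fun x y => (3/4 : ℝ) ≤ dist x y} := by
      constructor
      · exact insert_subset (by rwa [mem_closedBall_zero_iff]) hSball
      · intro x hx y hy hxy
        rcases hx with rfl | hx
        · rcases hy with rfl | hy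
          · exact absurd rfl hxy
          · rw [dist_eq_norm]; exact le_of_lt (hcon y hy)
        · rcases hy with rfl | hy
          · rw [dist_comm, dist_eq_norm]; exact le_of_lt (hcon x hx)
          · exact hSsep hx hy hxy
    have := hSmax hins (subset_insert r S)
    exact hrS (this (mem_insert r S))
  have hS0 : S.Nonempty := by
    obtain ⟨s, hs, _⟩ := net 0 (by simp)
    exact ⟨s, hs⟩
  -- summability
  have key : ∀ (q : ℝ) (σ : ℕ → S), 0 ≤ q → q < 1 →
      Summable (fun n => q ^ n • ((σ n : Y))) := by
    intro q σ hq0 hq1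
    apply Summable.of_norm_bounded (summable_geometric_of_lt_one hq0 hq1)
    intro n
    rw [norm_smul, norm_pow, Real.norm_of_nonneg hq0]
    calc q ^ n * ‖(σ n : Y)‖ ≤ q ^ n * 1 := by
          apply mul_le_mul_of_nonneg_left (hnorm1 _) (pow_nonneg hq0 n)
      _ = q ^ n := mul_one _

  -- surjectivity onto the closed unit ball
  have surj : ∀ y : Y, ‖y‖ ≤ 1 → ∃ σ : ℕ → S,
      (∑' n, ((3:ℝ)/4) ^ n • ((σ n : Y))) = y := by
    intro y hy
    have step : ∀ r : {r : Y // ‖r‖ ≤ 1}, ∃ p : S × {r : Y // ‖r‖ ≤ 1},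
        (r : Y) = (p.1 : Y) + ((3:ℝ)/4) • (p.2 : Y) := by
      rintro ⟨r, hr⟩
      obtain ⟨s, hs, hd⟩ := net r hr
      refine ⟨⟨⟨s, hs⟩, ⟨((3:ℝ)/4)⁻¹ • (r - s), ?_⟩⟩, ?_⟩
      · rw [norm_smul]
        have : ‖((3:ℝ)/4)⁻¹‖ = (4:ℝ)/3 := by
          rw [Real.norm_of_nonneg] <;> norm_num
        rw [this]
        nlinarith [norm_nonneg (r - s)]
      · simp only [smul_smul]
        rw [mul_inv_cancel₀ (by norm_num : ((3:ℝ)/4) ≠ 0), one_smul]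
        abel
    choose F hF using step
    let rseq : ℕ → {r : Y // ‖r‖ ≤ 1} := fun n => Nat.rec ⟨y, hy⟩ (fun _ r => (F r).2) n
    have rseq_succ : ∀ n, rseq (n + 1) = (F (rseq n)).2 := fun n => rfl
    let σ : ℕ → S := fun n => (F (rseq n)).1
    have inv : ∀ n : ℕ, y = (∑ k ∈ Finset.range n, ((3:ℝ)/4) ^ k • ((σ k : Y)))
        + ((3:ℝ)/4) ^ n • (rseq n).1 := by
      intro n
      induction n with
      | zero => simp [rseq]
      | succ n ih =>
        rw [Finset.sum_range_succ]
        have h1 : ((rseq n).1) = (σ n : Y) + ((3:ℝ)/4) • ((rseq (n+1)).1) := by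
          rw [rseq_succ]; exact hF (rseq n)
        calc y = (∑ k ∈ Finset.range n, ((3:ℝ)/4) ^ k • ((σ k : Y)))
              + ((3:ℝ)/4) ^ n • (rseq n).1 := ih
          _ = _ := by
            rw [h1, smul_add, smul_smul, ← pow_succ]
            abel
    refine ⟨σ, ?_⟩
    have hsum := key ((3:ℝ)/4) σ (by norm_num) (by norm_num)
    have h1 : Filter.Tendsto (fun n => ∑ k ∈ Finset.range n, ((3:ℝ)/4) ^ k • ((σ k : Y)))
        Filter.atTop (nhds (∑' n, ((3:ℝ)/4) ^ n • ((σ n : Y)))) :=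
      hsum.hasSum.tendsto_sum_nat
    have h2 : Filter.Tendsto (fun n => ∑ k ∈ Finset.range n, ((3:ℝ)/4) ^ k • ((σ k : Y)))
        Filter.atTop (nhds y) := by
      rw [tendsto_iff_norm_sub_tendsto_zero]
      apply squeeze_zero (fun n => norm_nonneg _) (g := fun n => ((3:ℝ)/4) ^ n)
      · intro n
        have := inv n
        have heq : (∑ k ∈ Finset.range n, ((3:ℝ)/4) ^ k • ((σ k : Y))) - y
            = -(((3:ℝ)/4) ^ n • (rseq n).1) := by
          rw [this]; abel
        rw [heq, norm_neg, norm_smul, norm_pow, Real.norm_of_nonneg (by norm_num : (0:ℝ) ≤ 3/4)]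
        calc ((3:ℝ)/4) ^ n * ‖(rseq n).1‖ ≤ ((3:ℝ)/4) ^ n * 1 :=
              mul_le_mul_of_nonneg_left (rseq n).2 (pow_nonneg (by norm_num) n)
          _ = _ := mul_one _
      · exact tendsto_pow_atTop_nhds_zero_of_lt_one (by norm_num) (by norm_num)
    exact tendsto_nhds_unique h1 h2
  -- injectivity of the (1/4)-coded map
  have inj : Function.Injective (fun σ : ℕ → S => ∑' n, ((1:ℝ)/4) ^ n • ((σ n : Y))) := by
    intro σ τ hστ
    simp only at hστ
    funext n
    induction n using Nat.strong_induction_on with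
    | _ n ih =>
      by_contra hne
      set a : ℕ → Y := fun k => ((1:ℝ)/4) ^ k • ((σ k : Y) - (τ k : Y)) with ha
      have habound : ∀ k, ‖a k‖ ≤ 2 * ((1:ℝ)/4) ^ k := by
        intro k
        rw [ha]
        simp only
        rw [norm_smul, norm_pow, Real.norm_of_nonneg (by norm_num : (0:ℝ) ≤ 1/4), mul_comm]
        apply mul_le_mul_of_nonneg_right _ (pow_nonneg (by norm_num) k)
        calc ‖(σ k : Y) - (τ k : Y)‖ ≤ ‖(σ k : Y)‖ + ‖(τ k : Y)‖ := norm_sub_le _ _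
          _ ≤ 1 + 1 := add_le_add (hnorm1 _) (hnorm1 _)
          _ = 2 := by norm_num
      have hsa : Summable a :=
        Summable.of_norm_bounded (g := fun k => 2 * ((1:ℝ)/4) ^ k)
          ((summable_geometric_of_lt_one (by norm_num) (by norm_num)).mul_left 2) habound
      have htot : (∑' k, a k) = 0 := by
        have : (fun k => a k) = fun k => ((1:ℝ)/4) ^ k • ((σ k : Y)) - ((1:ℝ)/4) ^ k • ((τ k : Y)) := by
          funext k; simp only [ha, smul_sub]
        rw [this, Summable.tsum_sub (key _ σ (by norm_num) (by norm_num)) (key _ τ (by norm_num) (by norm_num)),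
          hστ, sub_self]
      have hpre : ∀ k ∈ Finset.range n, a k = 0 := by
        intro k hk
        rw [ha]
        simp only [ih k (Finset.mem_range.mp hk), sub_self, smul_zero]
      have h1 : (∑' k, a (k + n)) = 0 := by
        have := Summable.sum_add_tsum_nat_add n hsa
        rw [Finset.sum_eq_zero hpre, zero_add] at this
        rw [this, htot]
      have h2 : a n + (∑' k, a (k + 1 + n)) = 0 := by
        have hs2 : Summable (fun k => a (k + n)) := (summable_nat_add_iff n).mpr hsa
        have := Summable.tsum_eq_zero_add hs2
        rw [h1] at this
        simpa using this.symm
      -- norm bounds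
      have hgs : Summable (fun k => 2 * ((1:ℝ)/4) ^ (k + 1 + n)) := by
        have : ∀ k : ℕ, 2 * ((1:ℝ)/4) ^ (k + 1 + n) = (2 * ((1:ℝ)/4) ^ (1 + n)) * ((1:ℝ)/4) ^ k := by
          intro k
          rw [show k + 1 + n = k + (1 + n) from by omega, pow_add]
          ring
        exact ((summable_geometric_of_lt_one (by norm_num) (by norm_num)).mul_left
          (2 * ((1:ℝ)/4) ^ (1 + n))).congr (fun k => (this k).symm)
      have hub : ‖a n‖ ≤ (2/3) * ((1:ℝ)/4) ^ n := by
        have h3 : a n = -(∑' k, a (k + 1 + n)) := eq_neg_of_add_eq_zero_left h2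
        have hs3 : Summable (fun k => ‖a (k + 1 + n)‖) := by
          apply Summable.of_nonneg_of_le (fun k => norm_nonneg _) (fun k => habound _) hgs
        calc ‖a n‖ = ‖∑' k, a (k + 1 + n)‖ := by rw [h3, norm_neg]
          _ ≤ ∑' k, ‖a (k + 1 + n)‖ := norm_tsum_le_tsum_norm hs3
          _ ≤ ∑' k, 2 * ((1:ℝ)/4) ^ (k + 1 + n) := Summable.tsum_le_tsum (fun k => habound _) hs3 hgs
          _ = (2 * ((1:ℝ)/4) ^ (1 + n)) * ∑' k : ℕ, ((1:ℝ)/4) ^ k := by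
              rw [← tsum_mul_left]
              apply tsum_congr
              intro k
              rw [show k + 1 + n = k + (1 + n) from by omega, pow_add]
              ring
          _ = (2 * ((1:ℝ)/4) ^ (1 + n)) * (1 - 1/4)⁻¹ := by
              rw [tsum_geometric_of_lt_one (by norm_num) (by norm_num)]
          _ = (2/3) * ((1:ℝ)/4) ^ n := by rw [pow_add, pow_one]; ring
      have hlow : (3/4) * ((1:ℝ)/4) ^ n ≤ ‖a n‖ := by
        have hsep' : (3/4 : ℝ) ≤ dist ((σ n : Y)) ((τ n : Y)) :=
          hSsep (σ n).2 (τ n).2 (fun h => hne (Subtype.ext h))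
        rw [dist_eq_norm] at hsep'
        have : ‖a n‖ = ((1:ℝ)/4) ^ n * ‖(σ n : Y) - (τ n : Y)‖ := by
          rw [ha]
          simp only
          rw [norm_smul, norm_pow, Real.norm_of_nonneg (by norm_num : (0:ℝ) ≤ 1/4)]
        rw [this]
        nlinarith [pow_nonneg (show (0:ℝ) ≤ 1/4 by norm_num) n]
      have hpos : (0:ℝ) < ((1:ℝ)/4) ^ n := pow_pos (by norm_num) n
      nlinarith
  -- cardinal juggling
  have c1 : #Y ≤ #(ℕ → ↥S) := by
    have e1 : #Y = #(ball (0:Y) 1) := mk_congr (Homeomorph.unitBall).toEquiv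
    have e3 : #(closedBall (0:Y) 1) ≤ #(ℕ → ↥S) := by
      have hsub : closedBall (0:Y) 1 ⊆
          Set.range (fun σ : ℕ → ↥S => ∑' n, ((3:ℝ)/4) ^ n • ((σ n : Y))) := by
        intro y hy
        rw [mem_closedBall_zero_iff] at hy
        obtain ⟨σ, hσ⟩ := surj y hy
        exact ⟨σ, hσ⟩
      exact (mk_le_mk_of_subset hsub).trans mk_range_le
    rw [e1]
    exact (mk_le_mk_of_subset ball_subset_closedBall).trans e3
  have c2 : #(ℕ → ↥S) ≤ #Y := mk_le_of_injective inj
  obtain ⟨e⟩ := (Cardinal.le_def _ _).mp c1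
  have c3 : #(ℕ → Y) ≤ #(ℕ → ℕ → ↥S) :=
    mk_le_of_injective (f := fun (f : ℕ → Y) n => e (f n))
      (fun f g h => funext fun n => e.injective (congrFun h n))
  have c4 : #(ℕ → ℕ → ↥S) = #(ℕ → ↥S) :=
    mk_congr ((Equiv.curry ℕ ℕ ↥S).symm.trans
      (Equiv.arrowCongr (Denumerable.eqv (ℕ × ℕ)) (Equiv.refl ↥S)))
  exact c3.trans (c4 ▸ c2)


end AuxCard

section AuxMain

open Metric

/-- If `ker f ⊆ ker g` for continuous linear functionals with `f ≠ 0`, then `g = c • f`. -/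
theorem prop_smul {X : Type u} [NormedAddCommGroup X] [NormedSpace ℝ X]
    {f g : X →L[ℝ] ℝ} (hf : f ≠ 0) (h : {x | f x = 0} ⊆ {x | g x = 0}) :
    ∃ c : ℝ, g = c • f := by
  obtain ⟨x₀, hx₀⟩ : ∃ x, f x ≠ 0 := by
    by_contra hc
    push_neg at hc
    exact hf (ContinuousLinearMap.ext fun x => by simp [hc x])
  refine ⟨g x₀ / f x₀, ContinuousLinearMap.ext fun x => ?_⟩
  have hker : f (x - (f x / f x₀) • x₀) = 0 := by
    simp only [map_sub, map_smul, smul_eq_mul]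
    field_simp
    ring
  have hg : g (x - (f x / f x₀) • x₀) = 0 := h hker
  simp only [map_sub, map_smul, smul_eq_mul, sub_eq_zero] at hg
  simp only [ContinuousLinearMap.smul_apply, smul_eq_mul]
  rw [hg]
  field_simp

set_option synthInstance.maxHeartbeats 400000 in
/-- Baire category: a hyperplane covered by countably many hyperplanes is inside one of them. -/
theorem ker_cover {X : Type u} [NormedAddCommGroup X] [NormedSpace ℝ X] [CompleteSpace X]
    {f : X →L[ℝ] ℝ} (hf : f ≠ 0) (g : ℕ → X →L[ℝ] ℝ)
    (h : {x | f x = 0} ⊆ ⋃ n, {x | g n x = 0}) :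
    ∃ n, {x | f x = 0} ⊆ {x | g n x = 0} := by
  set K : Submodule ℝ X := LinearMap.ker (f : X →ₗ[ℝ] ℝ) with hK
  have hKset : (K : Set X) = {x | f x = 0} := by
    ext x; simp [hK, LinearMap.mem_ker]
  have hclosed : IsClosed (K : Set X) := ContinuousLinearMap.isClosed_ker f
  haveI : CompleteSpace K := hclosed.completeSpace_coe
  haveI : Nonempty K := ⟨0⟩
  have hcover : (⋃ n, (Subtype.val ⁻¹' {x | g n x = 0} : Set K)) = Set.univ := by
    ext x
    simp only [Set.mem_iUnion, Set.mem_preimage, Set.mem_univ, iff_true]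
    have hx : (x : X) ∈ {x | f x = 0} := by rw [← hKset]; exact x.2
    exact Set.mem_iUnion.mp (h hx)
  obtain ⟨n, hn⟩ := nonempty_interior_of_iUnion_of_closed
    (fun n => (isClosed_eq (g n).continuous continuous_const).preimage continuous_subtype_val)
    hcover
  refine ⟨n, ?_⟩
  set q : Submodule ℝ K := LinearMap.ker (((g n).comp K.subtypeL : K →L[ℝ] ℝ) : K →ₗ[ℝ] ℝ) with hq
  have hq2 : (q : Set K) = Subtype.val ⁻¹' {x | g n x = 0} := by
    ext x
    simp [hq, LinearMap.mem_ker]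
  have hqtop : q = ⊤ := Submodule.eq_top_of_nonempty_interior' _ (by rw [hq2]; exact hn)
  intro x hx
  rw [← hKset] at hx
  have hmem : (⟨x, hx⟩ : K) ∈ q := hqtop ▸ Submodule.mem_top
  simpa [hq, LinearMap.mem_ker] using hmem

/-- In a space of rank `> 1` there is a "biorthogonal" pair of functionals. -/
theorem exists_dual_pair (X : Type u) [NormedAddCommGroup X] [NormedSpace ℝ X]
    (hdim : 1 < Module.rank ℝ X) :
    ∃ (f g : X →L[ℝ] ℝ) (x₁ x₂ : X), f x₁ ≠ 0 ∧ f x₂ = 0 ∧ g x₁ = 0 ∧ g x₂ ≠ 0 := by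
  haveI : Nontrivial X := rank_pos_iff_nontrivial.mp (lt_trans zero_lt_one hdim)
  obtain ⟨v, hv⟩ := exists_ne (0 : X)
  have hnot : ¬ Module.rank ℝ X ≤ 1 := not_le.mpr hdim
  rw [rank_le_one_iff] at hnot
  push_neg at hnot
  obtain ⟨w, hw⟩ := hnot v
  have sep : ∀ a b : X, (∀ r : ℝ, r • a ≠ b) → ∃ f : X →L[ℝ] ℝ, f a = 0 ∧ f b ≠ 0 := by
    intro a b hab
    have hbspan : b ∉ (Submodule.span ℝ {a} : Set X) := by
      intro hb
      rw [SetLike.mem_coe, Submodule.mem_span_singleton] at hb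
      obtain ⟨r, hr⟩ := hb
      exact hab r hr
    haveI : FiniteDimensional ℝ (Submodule.span ℝ ({a} : Set X)) :=
      FiniteDimensional.span_of_finite ℝ (Set.finite_singleton a)
    obtain ⟨f, u, hfu, hub⟩ := geometric_hahn_banach_closed_point
      (Submodule.span ℝ ({a} : Set X)).convex
      (Submodule.closed_of_finiteDimensional _) hbspan
    have hu0 : (0:ℝ) < u := by simpa using hfu 0 (Submodule.zero_mem _)
    have hfa : f a = 0 := by
      by_contra hfa
      have h2 := hfu ((2 * u / f a) • a)
        (Submodule.smul_mem _ _ (Submodule.mem_span_singleton_self a))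
      rw [map_smul, smul_eq_mul, div_mul_cancel₀ _ hfa] at h2
      linarith
    exact ⟨f, hfa, fun h0 => by rw [h0] at hub; linarith⟩
  obtain ⟨g, hg1, hg2⟩ := sep v w hw
  have hvw : ∀ r : ℝ, r • w ≠ v := by
    intro r hr
    have hr0 : r ≠ 0 := by
      rintro rfl
      rw [zero_smul] at hr
      exact hv hr.symm
    exact hw r⁻¹ (by rw [← hr, smul_smul, inv_mul_cancel₀ hr0, one_smul])
  obtain ⟨f, hf1, hf2⟩ := sep w v hvw
  exact ⟨f, g, v, w, hf2, hf1, hg1, hg2⟩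

end AuxMain

/-- cof(X) = |X*| for any Banach space of dimension > 1. -/
theorem stmt4 (X : Type u) [NormedAddCommGroup X] [NormedSpace ℝ X] [CompleteSpace X]
    (hdim : 1 < Module.rank ℝ X) :
    cofH X = #(X →L[ℝ] ℝ) := by
  classical
  obtain ⟨f₀, g₀, x₁, x₂, hf₁, hf₂, hg₁, hg₂⟩ := exists_dual_pair X hdim
  have hf0 : f₀ ≠ 0 := by
    rintro rfl
    simp at hf₁
  haveI : Nontrivial (X →L[ℝ] ℝ) := nontrivial_of_ne f₀ 0 hf0
  set T : Set (Set X) := {H | IsHyperplane H} with hT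
  -- T has at least continuum many elements
  have hTc : Cardinal.continuum.{u} ≤ #T := by
    have hne : ∀ t : ℝ, f₀ + t • g₀ ≠ 0 := by
      intro t ht
      have h1 : (f₀ + t • g₀) x₁ = 0 := by rw [ht]; rfl
      simp only [ContinuousLinearMap.add_apply, ContinuousLinearMap.smul_apply,
        smul_eq_mul, hg₁, mul_zero, add_zero] at h1
      exact hf₁ h1
    have hmap : ∀ t : ℝ, ({x | (f₀ + t • g₀) x = 0} : Set X) ∈ T :=
      fun t => ⟨f₀ + t • g₀, hne t, rfl⟩
    have hinj : Function.Injective (fun t : ℝ =>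
        (⟨{x | (f₀ + t • g₀) x = 0}, hmap t⟩ : T)) := by
      intro s t hst
      simp only [Subtype.mk.injEq] at hst
      obtain ⟨c, hc⟩ := prop_smul (hne s) (le_of_eq hst)
      have h1 := congrArg (fun φ : X →L[ℝ] ℝ => φ x₁) hc
      have h2 := congrArg (fun φ : X →L[ℝ] ℝ => φ x₂) hc
      simp only [ContinuousLinearMap.add_apply, ContinuousLinearMap.smul_apply,
        smul_eq_mul, hg₁, hf₂, mul_zero, add_zero, zero_add] at h1 h2
      have hc1 : c = 1 := by
        have h1' : (c - 1) * f₀ x₁ = 0 := by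
          rw [sub_mul, one_mul, ← h1, sub_self]
        rcases mul_eq_zero.mp h1' with h | h
        · exact sub_eq_zero.mp h
        · exact absurd h hf₁
      rw [hc1, one_mul] at h2
      exact (mul_right_cancel₀ hg₂ h2).symm
    have hlift := Cardinal.lift_mk_le'.mpr ⟨⟨_, hinj⟩⟩
    rwa [Cardinal.mk_real, Cardinal.lift_continuum, Cardinal.lift_uzero] at hlift
  -- the canonical cofinal family
  have hmem1 : ∀ A ∈ Set.range (fun σ : ℕ → {f : X →L[ℝ] ℝ // f ≠ 0} =>
      ⋃ n, {x | (σ n).1 x = 0}), InHyperplaneIdeal A := by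
    rintro A ⟨σ, rfl⟩
    refine ⟨Set.range (fun n => {x | (σ n).1 x = 0}), Set.countable_range _, ?_, ?_⟩
    · rintro H ⟨n, rfl⟩
      exact ⟨(σ n).1, (σ n).2, rfl⟩
    · rw [Set.sUnion_range]
  haveI : Nonempty {f : X →L[ℝ] ℝ // f ≠ 0} := ⟨⟨f₀, hf0⟩⟩
  have hmem2 : ∀ Y : Set X, InHyperplaneIdeal Y →
      ∃ A ∈ Set.range (fun σ : ℕ → {f : X →L[ℝ] ℝ // f ≠ 0} =>
        ⋃ n, {x | (σ n).1 x = 0}), Y ⊆ A := by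
    intro Y hY
    obtain ⟨Fam, hcnt, hhyp, hsub⟩ := hY
    rcases Fam.eq_empty_or_nonempty with rfl | hFne
    · refine ⟨_, ⟨fun _ => Classical.arbitrary _, rfl⟩, ?_⟩
      intro y hy
      exact absurd (hsub hy) (by simp)
    · obtain ⟨e, he⟩ := Set.Countable.exists_eq_range hcnt hFne
      choose φ hφ1 hφ2 using fun n : ℕ => hhyp (e n) (by rw [he]; exact ⟨n, rfl⟩)
      refine ⟨_, ⟨fun n => (⟨φ n, hφ1 n⟩ : {f : X →L[ℝ] ℝ // f ≠ 0}), rfl⟩, ?_⟩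
      intro y hy
      obtain ⟨s, hs, hys⟩ := hsub hy
      rw [he] at hs
      obtain ⟨n, rfl⟩ := hs
      exact Set.mem_iUnion.mpr ⟨n, by rw [← hφ2 n]; exact hys⟩
  have hcard : #(Set.range (fun σ : ℕ → {f : X →L[ℝ] ℝ // f ≠ 0} =>
      ⋃ n, {x | (σ n).1 x = 0})) ≤ #(X →L[ℝ] ℝ) := by
    refine le_trans Cardinal.mk_range_le ?_
    refine le_trans (Cardinal.mk_le_of_injective
      (f := fun (σ : ℕ → {f : X →L[ℝ] ℝ // f ≠ 0}) n => (σ n).1) ?_) card_seq_le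
    intro σ τ h
    funext n
    exact Subtype.ext (congrFun h n)
  have hup : cofH X ≤ #(X →L[ℝ] ℝ) := by
    refine le_trans (csInf_le' ?_) hcard
    exact ⟨_, hmem1, hmem2, rfl⟩
  refine le_antisymm hup ?_
  -- lower bound
  unfold cofH
  refine le_csInf ⟨_, _, hmem1, hmem2, rfl⟩ ?_
  rintro c ⟨F, h1, h2, rfl⟩
  choose! C hC1 hC2 hC3 using h1
  have hTsub : T ⊆ ⋃ A : ↥F, C A.1 := by
    rintro H ⟨f, hfne, rfl⟩
    have hHideal : InHyperplaneIdeal {x | f x = 0} := by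
      refine ⟨{{x | f x = 0}}, Set.countable_singleton _, ?_, ?_⟩
      · rintro H hH
        rw [Set.mem_singleton_iff] at hH
        exact hH ▸ ⟨f, hfne, rfl⟩
      · simp
    obtain ⟨A, hAF, hHA⟩ := h2 _ hHideal
    have hCA := hC3 A hAF
    have hCAne : (C A).Nonempty := by
      rcases (C A).eq_empty_or_nonempty with hser | hne
      · exfalso
        have h0 : (0:X) ∈ {x | f x = 0} := by simp
        have := hCA (hHA h0)
        rw [hser] at this
        simpa using this
      · exact hne
    obtain ⟨e, he⟩ := Set.Countable.exists_eq_range (hC1 A hAF) hCAne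
    choose φ hφ1 hφ2 using fun n : ℕ => hC2 A hAF (e n) (by rw [he]; exact ⟨n, rfl⟩)
    have hcover : {x | f x = 0} ⊆ ⋃ n, {x | φ n x = 0} := by
      intro y hy
      obtain ⟨s, hs, hys⟩ := hCA (hHA hy)
      rw [he] at hs
      obtain ⟨n, rfl⟩ := hs
      exact Set.mem_iUnion.mpr ⟨n, by rw [← hφ2 n]; exact hys⟩
    obtain ⟨n, hn⟩ := ker_cover hfne φ hcover
    obtain ⟨cc, hcc⟩ := prop_smul hfne hn
    have hccne : cc ≠ 0 := by
      rintro rfl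
      rw [zero_smul] at hcc
      exact hφ1 n hcc
    have hkereq : {x | f x = 0} = {x | φ n x = 0} := by
      ext x
      simp [hcc, ContinuousLinearMap.smul_apply, smul_eq_mul, mul_eq_zero, hccne]
    refine Set.mem_iUnion.mpr ⟨⟨A, hAF⟩, ?_⟩
    rw [hkereq, ← hφ2 n]
    show e n ∈ C A
    rw [he]
    exact ⟨n, rfl⟩
  have hcount : #T ≤ #F * Cardinal.aleph0 := by
    refine le_trans (Cardinal.mk_le_mk_of_subset hTsub) ?_
    refine le_trans (Cardinal.mk_iUnion_le _) ?_
    refine mul_le_mul' le_rfl (ciSup_le' ?_)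
    intro A
    haveI := (hC1 A.1 A.2).to_subtype
    exact Cardinal.mk_le_aleph0
  have hFinf : Cardinal.aleph0 ≤ #F := by
    by_contra hcon
    push_neg at hcon
    have hTa : #T ≤ Cardinal.aleph0 := by
      refine le_trans hcount ?_
      calc #F * Cardinal.aleph0 ≤ Cardinal.aleph0 * Cardinal.aleph0 :=
            mul_le_mul' (le_of_lt hcon) le_rfl
        _ = Cardinal.aleph0 := Cardinal.aleph0_mul_aleph0
    exact absurd (le_trans hTc hTa) (not_le.mpr Cardinal.aleph0_lt_continuum)
  have hTF : #T ≤ #F := by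
    calc #T ≤ #F * Cardinal.aleph0 := hcount
      _ ≤ #F * #F := mul_le_mul' le_rfl hFinf
      _ = #F := Cardinal.mul_eq_self hFinf
  -- dual injects into T × ℝ
  have hrep : ∀ H : ↥T, ∃ f : X →L[ℝ] ℝ, f ≠ 0 ∧ (H : Set X) = {x | f x = 0} :=
    fun H => H.2
  choose rep hrep1 hrep2 using hrep
  have hdec : ∀ f : X →L[ℝ] ℝ, f ≠ 0 → ∃ (H : ↥T) (cc : ℝ), cc ≠ 0 ∧ f = cc • rep H := by
    intro f hfne
    have hHT : ({x | f x = 0} : Set X) ∈ T := ⟨f, hfne, rfl⟩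
    refine ⟨⟨_, hHT⟩, ?_⟩
    have hsub : {x | rep ⟨_, hHT⟩ x = 0} ⊆ {x | f x = 0} := by
      rw [← hrep2 ⟨_, hHT⟩]
    obtain ⟨cc, hcc⟩ := prop_smul (hrep1 ⟨_, hHT⟩) hsub
    refine ⟨cc, ?_, hcc⟩
    rintro rfl
    rw [zero_smul] at hcc
    exact hfne hcc
  choose Hf cf hcf1 hcf2 using hdec
  have hdual : #(X →L[ℝ] ℝ) ≤ #(↥T × ℝ) := by
    have H₀ : ↥T := ⟨{x | f₀ x = 0}, f₀, hf0, rfl⟩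
    refine Cardinal.mk_le_of_injective
      (f := fun f => if hf : f = 0 then (H₀, (0:ℝ)) else (Hf f hf, cf f hf)) ?_
    intro f g hfg
    simp only at hfg
    by_cases hf : f = 0 <;> by_cases hg : g = 0
    · rw [hf, hg]
    · rw [dif_pos hf, dif_neg hg] at hfg
      exact absurd (congrArg Prod.snd hfg).symm (hcf1 g hg)
    · rw [dif_neg hf, dif_pos hg] at hfg
      exact absurd (congrArg Prod.snd hfg) (hcf1 f hf)
    · rw [dif_neg hf, dif_neg hg] at hfg
      have hH := congrArg Prod.fst hfg
      have hc := congrArg Prod.snd hfg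
      simp only at hH hc
      rw [hcf2 f hf, hcf2 g hg, hH, hc]
  have hprod : #(↥T × ℝ) = #T * Cardinal.continuum.{u} := by
    rw [Cardinal.mk_prod, Cardinal.mk_real, Cardinal.lift_continuum, Cardinal.lift_uzero]
  have hTcont : #T * Cardinal.continuum.{u} = #T := by
    rw [Cardinal.mul_eq_max (le_trans Cardinal.aleph0_le_continuum hTc)
      Cardinal.aleph0_le_continuum]
    exact max_eq_left hTc
  calc #(X →L[ℝ] ℝ) ≤ #(↥T × ℝ) := hdual
    _ = #T := by rw [hprod, hTcont]
    _ ≤ #F := hTF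


end
end

section
/- Let X be a real Banach space of dimension greater than 1 and let Γ be a set of cardinality ℵ₁. The following conditions are equivalent: (1) cov(X) = ℵ₁; (2) X is the union of a family of ℵ₁-many hyperplanes of X; (3) there is a set A of nonzero continuous linear functionals on X with |A| = ℵ₁ such that for every x ∈ X there is x* ∈ A with x*(x) = 0; (4) there is a bounded linear operator T : X → ℓ∞(Γ) such that (a) for every γ ∈ Γ there is x ∈ X with T(x)(γ) ≠ 0, and (b) for every x ∈ X there is γ ∈ Γ with T(x)(γ) = 0. -/
open Cardinal Set

universe u v

noncomputable section

section Aux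

variable {X : Type u} [NormedAddCommGroup X] [NormedSpace ℝ X]

lemma IsHyperplane.closed {H : Set X} (h : IsHyperplane H) : IsClosed H := by
  obtain ⟨f, -, rfl⟩ := h
  exact isClosed_eq f.continuous continuous_const

lemma IsHyperplane.interior_eq {H : Set X} (h : IsHyperplane H) : interior H = ∅ := by
  obtain ⟨f, hf, rfl⟩ := h
  by_contra hne
  have hne' : (interior {x : X | f x = 0}).Nonempty := nonempty_iff_ne_empty.2 hne
  have hker : ({x : X | f x = 0} : Set X) = (LinearMap.ker (f : X →ₗ[ℝ] ℝ) : Set X) := rfl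
  rw [hker] at hne'
  have := Submodule.eq_top_of_nonempty_interior' _ hne'
  apply hf
  ext x
  have hx : x ∈ LinearMap.ker (f : X →ₗ[ℝ] ℝ) := this ▸ Submodule.mem_top
  simpa using hx

lemma not_inIdeal_univ [CompleteSpace X] : ¬ InHyperplaneIdeal (univ : Set X) := by
  rintro ⟨F, hFc, hFh, hFu⟩
  haveI : Nonempty X := ⟨0⟩
  haveI := hFc.to_subtype
  have hU : ⋃ H : F, (H : Set X) = Set.univ := by
    apply eq_univ_of_univ_subset
    rwa [← sUnion_eq_iUnion]
  obtain ⟨H, hH⟩ := nonempty_interior_of_iUnion_of_closed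
    (fun H : F => (hFh H H.2).closed) hU
  rw [(hFh H H.2).interior_eq] at hH
  exact hH.ne_empty rfl

lemma inIdeal_sUnion {F : Set (Set X)} (hF : F.Countable)
    (h : ∀ A ∈ F, InHyperplaneIdeal A) : InHyperplaneIdeal (⋃₀ F) := by
  choose G hGc hGh hGs using h
  haveI := hF.to_subtype
  refine ⟨⋃ A : F, G A A.2, countable_iUnion (fun A => hGc A A.2), ?_, ?_⟩
  · rintro H hH
    rw [mem_iUnion] at hH
    obtain ⟨A, hA⟩ := hH
    exact hGh A A.2 H hA
  · rintro x ⟨A, hA, hx⟩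
    obtain ⟨H, hH, hxH⟩ := hGs A hA hx
    exact ⟨H, mem_iUnion.2 ⟨⟨A, hA⟩, hH⟩, hxH⟩

/-- From an uncountable covering family of functionals, Baire gives a contradiction. -/
lemma kernels_not_countable [CompleteSpace X] {A : Set (X →L[ℝ] ℝ)} (h0 : (0 : X →L[ℝ] ℝ) ∉ A)
    (hcov : ∀ x : X, ∃ f ∈ A, f x = 0) : ¬ A.Countable := by
  intro hc
  apply not_inIdeal_univ (X := X)
  refine ⟨(fun f : X →L[ℝ] ℝ => {x | f x = 0}) '' A, hc.image _, ?_, ?_⟩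
  · rintro H ⟨f, hf, rfl⟩
    exact ⟨f, fun h => h0 (h ▸ hf), rfl⟩
  · intro x _
    obtain ⟨f, hf, hfx⟩ := hcov x
    exact ⟨_, mem_image_of_mem _ hf, hfx⟩

lemma aleph_one_le_of_cover [CompleteSpace X] {F : Set (Set X)}
    (hid : ∀ A ∈ F, InHyperplaneIdeal A) (hu : ⋃₀ F = Set.univ) : ℵ₁ ≤ #F := by
  by_contra h
  rw [not_le, ← countable_iff_lt_aleph_one] at h
  exact not_inIdeal_univ (X := X) (hu ▸ inIdeal_sUnion h hid)

lemma covH_eq_of_cover [CompleteSpace X] {F : Set (Set X)} (hF : #F = ℵ₁)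
    (hh : ∀ H ∈ F, IsHyperplane H) (hu : ⋃₀ F = Set.univ) : covH X = ℵ₁ := by
  have hid : ∀ A ∈ F, InHyperplaneIdeal A := fun A hA =>
    ⟨{A}, countable_singleton _, by simpa using hh A hA, by simp⟩
  apply le_antisymm
  · exact csInf_le' ⟨F, hid, hu, hF⟩
  · refine le_csInf ?_ ?_
    · exact ⟨ℵ₁, F, hid, hu, hF⟩
    rintro c ⟨G, hGid, hGu, rfl⟩
    exact aleph_one_le_of_cover hGid hGu

lemma exists_cover_of_covH [CompleteSpace X] (h : covH X = ℵ₁) :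
    ∃ F : Set (Set X), #F = ℵ₁ ∧ (∀ H ∈ F, IsHyperplane H) ∧ ⋃₀ F = Set.univ := by
  set S := {c | ∃ F : Set (Set X), (∀ A ∈ F, InHyperplaneIdeal A) ∧ ⋃₀ F = Set.univ ∧ #F = c}
    with hS
  have hSne : S.Nonempty := by
    by_contra hne
    rw [not_nonempty_iff_eq_empty] at hne
    have : covH X = 0 := Cardinal.sInf_eq_zero_iff.2 (Or.inl (hS ▸ hne))
    rw [h] at this
    exact absurd (aleph0_lt_aleph_one.trans_le this.le) (not_lt_of_ge zero_le)
  have hmem : covH X ∈ S := csInf_mem hSne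
  rw [h] at hmem
  obtain ⟨F, hFid, hFu, hFc⟩ := hmem
  choose G hGc hGh hGs using hFid
  haveI : Nonempty X := ⟨0⟩
  refine ⟨⋃ A : F, G A A.2, ?_, ?_, ?_⟩
  · apply le_antisymm
    · calc #(⋃ A : F, G A A.2) ≤ Cardinal.sum (fun A : F => #(G A A.2)) :=
            mk_iUnion_le_sum_mk
        _ ≤ Cardinal.sum (fun _ : F => ℵ₀) := Cardinal.sum_le_sum _ _ (fun A => by
            haveI := (hGc A A.2).to_subtype; exact mk_le_aleph0)
        _ = #F * ℵ₀ := sum_const' _ _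
        _ = ℵ₁ * ℵ₀ := by rw [hFc]
        _ = ℵ₁ := by
            rw [Cardinal.mul_eq_max (aleph0_le_aleph 1) le_rfl]
            exact max_eq_left (aleph0_le_aleph 1)
    · apply aleph_one_le_of_cover (X := X)
      · rintro H hH
        rw [mem_iUnion] at hH
        obtain ⟨A, hA⟩ := hH
        exact ⟨{H}, countable_singleton _, by simpa using hGh A A.2 H hA, by simp⟩
      · apply eq_univ_of_univ_subset
        rw [← hFu]
        rintro x ⟨A, hA, hx⟩
        obtain ⟨H, hH, hxH⟩ := hGs A hA hx
        exact ⟨H, mem_iUnion.2 ⟨⟨A, hA⟩, hH⟩, hxH⟩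
  · rintro H hH
    rw [mem_iUnion] at hH
    obtain ⟨A, hA⟩ := hH
    exact hGh A A.2 H hA
  · apply eq_univ_of_univ_subset
    rw [← hFu]
    rintro x ⟨A, hA, hx⟩
    obtain ⟨H, hH, hxH⟩ := hGs A hA hx
    exact ⟨H, mem_iUnion.2 ⟨⟨A, hA⟩, hH⟩, hxH⟩

lemma exists_funs_of_cover {F : Set (Set X)} (hF : #F = ℵ₁)
    (hh : ∀ H ∈ F, IsHyperplane H) (hu : ⋃₀ F = Set.univ) :
    ∃ A : Set (X →L[ℝ] ℝ), #A = ℵ₁ ∧ (0 : X →L[ℝ] ℝ) ∉ A ∧ ∀ x : X, ∃ f ∈ A, f x = 0 := by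
  choose f hf0 hfk using hh
  have hinj : Function.Injective (fun H : F => f H H.2) := by
    intro H1 H2 h12
    apply Subtype.ext
    rw [hfk H1 H1.2, hfk H2 H2.2]
    simp only at h12
    rw [h12]
  refine ⟨Set.range (fun H : F => f H H.2), ?_, ?_, ?_⟩
  · rw [Cardinal.mk_range_eq _ hinj, hF]
  · rintro ⟨H, hH⟩
    exact hf0 H H.2 hH
  · intro x
    have hx : x ∈ ⋃₀ F := hu ▸ mem_univ x
    obtain ⟨H, hHF, hxH⟩ := hx
    refine ⟨f H hHF, ⟨⟨H, hHF⟩, rfl⟩, ?_⟩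
    have := hfk H hHF ▸ hxH
    exact this

lemma exists_cover_of_funs [CompleteSpace X] {A : Set (X →L[ℝ] ℝ)} (hA : #A = ℵ₁)
    (h0 : (0 : X →L[ℝ] ℝ) ∉ A) (hcov : ∀ x : X, ∃ f ∈ A, f x = 0) :
    ∃ F : Set (Set X), #F = ℵ₁ ∧ (∀ H ∈ F, IsHyperplane H) ∧ ⋃₀ F = Set.univ := by
  refine ⟨(fun f : X →L[ℝ] ℝ => {x | f x = 0}) '' A, ?_, ?_, ?_⟩
  · apply le_antisymm (Cardinal.mk_image_le.trans_eq hA)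
    apply aleph_one_le_of_cover (X := X)
    · rintro H ⟨f, hf, rfl⟩
      exact ⟨{ {x | f x = 0} }, countable_singleton _,
        by simpa using ⟨f, fun h => h0 (h ▸ hf), rfl⟩, by simp⟩
    · apply eq_univ_of_forall
      intro x
      obtain ⟨f, hf, hfx⟩ := hcov x
      exact ⟨_, mem_image_of_mem _ hf, hfx⟩
  · rintro H ⟨f, hf, rfl⟩
    exact ⟨f, fun h => h0 (h ▸ hf), rfl⟩
  · apply eq_univ_of_forall
    intro x
    obtain ⟨f, hf, hfx⟩ := hcov x
    exact ⟨_, mem_image_of_mem _ hf, hfx⟩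

variable {Γ : Type v}

/-- Bundle a uniformly bounded family of functionals into an operator into `ℓ∞(Γ)`. -/
def opOfFuns (g : Γ → (X →L[ℝ] ℝ)) (hg : ∀ γ (x : X), ‖g γ x‖ ≤ ‖x‖) :
    X →L[ℝ] lp (fun _ : Γ => ℝ) ⊤ :=
  LinearMap.mkContinuous
    { toFun := fun x => ⟨fun γ => g γ x, memℓp_infty ⟨‖x‖, by
        rintro - ⟨γ, rfl⟩
        exact hg γ x⟩⟩
      map_add' := fun x y => by
        ext γ
        simp [lp.coeFn_add]
        rfl
      map_smul' := fun c x => by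
        ext γ
        simp [lp.coeFn_smul] }
    1 (fun x => by
      rw [one_mul]
      exact lp.norm_le_of_forall_le (norm_nonneg x) (fun γ => hg γ x))

@[simp] lemma opOfFuns_apply (g : Γ → (X →L[ℝ] ℝ)) (hg : ∀ γ (x : X), ‖g γ x‖ ≤ ‖x‖)
    (x : X) (γ : Γ) : opOfFuns g hg x γ = g γ x := rfl

/-- Coordinate functional of an operator into `ℓ∞(Γ)`. -/
def coordFun (T : X →L[ℝ] lp (fun _ : Γ => ℝ) ⊤) (γ : Γ) : X →L[ℝ] ℝ :=
  LinearMap.mkContinuous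
    { toFun := fun x => T x γ
      map_add' := fun x y => by simp only []; rw [map_add, lp.coeFn_add]; rfl
      map_smul' := fun c x => by simp only []; rw [map_smul, lp.coeFn_smul]; rfl }
    ‖T‖ (fun x =>
      (lp.norm_apply_le_norm ENNReal.top_ne_zero (T x) γ).trans (T.le_opNorm x))

@[simp] lemma coordFun_apply (T : X →L[ℝ] lp (fun _ : Γ => ℝ) ⊤) (γ : Γ) (x : X) :
    coordFun T γ x = T x γ := rfl

lemma exists_op_of_funs {A : Set (X →L[ℝ] ℝ)} (hA : #A = ℵ₁) (h0 : (0 : X →L[ℝ] ℝ) ∉ A)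
    (hcov : ∀ x : X, ∃ f ∈ A, f x = 0) (hΓ : #Γ = Cardinal.aleph 1) :
    ∃ T : X →L[ℝ] lp (fun _ : Γ => ℝ) ⊤,
      (∀ γ : Γ, ∃ x : X, T x γ ≠ 0) ∧ (∀ x : X, ∃ γ : Γ, T x γ = 0) := by
  have he : Nonempty (Γ ≃ A) := by
    rw [← Cardinal.lift_mk_eq', hΓ, hA]
    simp [Cardinal.lift_aleph]
  obtain ⟨e⟩ := he
  set g : Γ → (X →L[ℝ] ℝ) := fun γ => ‖(e γ : X →L[ℝ] ℝ)‖⁻¹ • (e γ : X →L[ℝ] ℝ) with hg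
  have hgn : ∀ γ (x : X), ‖g γ x‖ ≤ ‖x‖ := by
    intro γ x
    have h1 : g γ x = ‖(e γ : X →L[ℝ] ℝ)‖⁻¹ * (e γ : X →L[ℝ] ℝ) x := rfl
    rw [h1, norm_mul, norm_inv, norm_norm]
    rcases eq_or_ne ‖(e γ : X →L[ℝ] ℝ)‖ 0 with h | h
    · have h2 : (e γ : X →L[ℝ] ℝ) = 0 := norm_eq_zero.1 h
      simp [h2]
    · have hpos : 0 < ‖(e γ : X →L[ℝ] ℝ)‖ := lt_of_le_of_ne (norm_nonneg _) (Ne.symm h)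
      rw [inv_mul_le_iff₀ hpos]
      exact (e γ : X →L[ℝ] ℝ).le_opNorm x
  refine ⟨opOfFuns g hgn, ?_, ?_⟩
  · intro γ
    have hne : (e γ : X →L[ℝ] ℝ) ≠ 0 := fun h => h0 (h ▸ (e γ).2)
    have : ∃ x : X, (e γ : X →L[ℝ] ℝ) x ≠ 0 := by
      by_contra hx
      push_neg at hx
      exact hne (ContinuousLinearMap.ext fun x => by simpa using hx x)
    obtain ⟨x, hx⟩ := this
    refine ⟨x, ?_⟩
    rw [opOfFuns_apply, hg]
    simp only [ContinuousLinearMap.smul_apply, smul_eq_mul]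
    exact mul_ne_zero (inv_ne_zero (norm_ne_zero_iff.2 hne)) hx
  · intro x
    obtain ⟨f, hf, hfx⟩ := hcov x
    refine ⟨e.symm ⟨f, hf⟩, ?_⟩
    rw [opOfFuns_apply, hg]
    simp only [Equiv.apply_symm_apply, ContinuousLinearMap.smul_apply, smul_eq_mul]
    rw [hfx, mul_zero]

lemma exists_funs_of_op [CompleteSpace X] (hΓ : #Γ = Cardinal.aleph 1)
    (T : X →L[ℝ] lp (fun _ : Γ => ℝ) ⊤)
    (ha : ∀ γ : Γ, ∃ x : X, T x γ ≠ 0) (hb : ∀ x : X, ∃ γ : Γ, T x γ = 0) :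
    ∃ A : Set (X →L[ℝ] ℝ), #A = ℵ₁ ∧ (0 : X →L[ℝ] ℝ) ∉ A ∧ ∀ x : X, ∃ f ∈ A, f x = 0 := by
  set A := Set.range (coordFun T) with hA
  have h0 : (0 : X →L[ℝ] ℝ) ∉ A := by
    rintro ⟨γ, hγ⟩
    obtain ⟨x, hx⟩ := ha γ
    apply hx
    rw [← coordFun_apply T γ x, hγ]
    rfl
  have hcov : ∀ x : X, ∃ f ∈ A, f x = 0 := by
    intro x
    obtain ⟨γ, hγ⟩ := hb x
    exact ⟨coordFun T γ, ⟨γ, rfl⟩, hγ⟩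
  refine ⟨A, le_antisymm ?_ ?_, h0, hcov⟩
  · have h := Cardinal.mk_range_le_lift (f := coordFun T)
    rw [hΓ, Cardinal.lift_aleph] at h
    have h' : Cardinal.lift.{v} #A ≤ ℵ₁ := by
      rw [hA]
      simpa using h
    exact Cardinal.lift_le_aleph_one.1 h'
  · by_contra h
    rw [not_le, ← countable_iff_lt_aleph_one] at h
    exact kernels_not_countable h0 hcov h

end Aux

/-- equivalent conditions for cov(X) = ℵ₁. -/
theorem stmt9 (X : Type u) [NormedAddCommGroup X] [NormedSpace ℝ X] [CompleteSpace X]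
    (hdim : 1 < Module.rank ℝ X) (Γ : Type v) (hΓ : #Γ = Cardinal.aleph 1) :
    List.TFAE [
      covH X = Cardinal.aleph 1,
      ∃ F : Set (Set X), #F = Cardinal.aleph 1 ∧ (∀ H ∈ F, IsHyperplane H) ∧ ⋃₀ F = Set.univ,
      ∃ A : Set (X →L[ℝ] ℝ), #A = Cardinal.aleph 1 ∧ (0 : X →L[ℝ] ℝ) ∉ A ∧
        ∀ x : X, ∃ f ∈ A, f x = 0,
      ∃ T : X →L[ℝ] lp (fun _ : Γ => ℝ) ⊤,
        (∀ γ : Γ, ∃ x : X, T x γ ≠ 0) ∧ (∀ x : X, ∃ γ : Γ, T x γ = 0)] := by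
  tfae_have 1 → 2 := fun h => exists_cover_of_covH h
  tfae_have 2 → 1 := fun ⟨F, hF, hh, hu⟩ => covH_eq_of_cover hF hh hu
  tfae_have 2 → 3 := fun ⟨F, hF, hh, hu⟩ => exists_funs_of_cover hF hh hu
  tfae_have 3 → 2 := fun ⟨A, hA, h0, hcov⟩ => exists_cover_of_funs hA h0 hcov
  tfae_have 3 → 4 := fun ⟨A, hA, h0, hcov⟩ => exists_op_of_funs hA h0 hcov hΓ
  tfae_have 4 → 3 := fun ⟨T, ha, hb⟩ => exists_funs_of_op hΓ T ha hb
  tfae_finish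

end
end
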